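/- Let ι be a finite index type and for each k in ι let m k be a natural number and A k an (m k)×(m k) matrix over ZMod 2. Then in the ring of Laurent polynomials over ℤ, the Zulli state sum of the block diagonal matrix Matrix.blockDiagonal' A is the product of the state sums of the blocks: ⟨Matrix.blockDiagonal' A⟩ = Π_{k ∈ ι} ⟨A k⟩. -/
import Mathlib


open LaurentPolynomial

/-- The nullity over `ZMod 2` of a square matrix: the finrank of the kernel of
the linear map `x ↦ M.mulVec x`. -/
noncomputable def nullity {ι : Type*} [Fintype ι] (M : Matrix ι ι (ZMod 2)) : ℕ :=
  Module.finrank (ZMod 2) (LinearMap.ker M.mulVecLin)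

/-- The Zulli state sum of a square matrix over `ZMod 2`, in Laurent polynomials
over `ℤ` (the variable `T 1` plays the role of `t^(1/4)`):
`⟨M⟩ = Σ_{S : Finset ι} T (2|S| - card ι) * (-T (-2) - T 2) ^ nul (M_S)`,
where `M_S` is `M` toggled along the indicator of `S`. -/
noncomputable def stateSum {ι : Type*} [Fintype ι] [DecidableEq ι]
    (M : Matrix ι ι (ZMod 2)) : LaurentPolynomial ℤ :=
  ∑ S : Finset ι,
    T (2 * (S.card : ℤ) - (Fintype.card ι : ℤ)) *
      (-T (-2) - T 2) ^
        nullity (M + Matrix.diagonal (fun i => if i ∈ S then (1 : ZMod 2) else 0))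

section Aux
variable {ι : Type*} [Fintype ι] [DecidableEq ι] {m : ι → ℕ}

lemma mulVec_blockDiagonal'_aux (B : ∀ k, Matrix (Fin (m k)) (Fin (m k)) (ZMod 2))
    (x : (Σ k, Fin (m k)) → ZMod 2) (k : ι) (i : Fin (m k)) :
    (Matrix.blockDiagonal' B).mulVec x ⟨k, i⟩ = (B k).mulVec (fun j => x ⟨k, j⟩) i := by
  simp only [Matrix.mulVec, dotProduct]
  rw [← Finset.univ_sigma_univ, Finset.sum_sigma]
  rw [Fintype.sum_eq_single k]
  · simp [Matrix.blockDiagonal'_apply_eq]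
  · intro k' h
    apply Finset.sum_eq_zero
    intro j _
    rw [Matrix.blockDiagonal'_apply_ne _ _ _ (Ne.symm h), zero_mul]

/-- The kernel of a block diagonal matrix is the product of the kernels of blocks. -/
noncomputable def kerEquiv (B : ∀ k, Matrix (Fin (m k)) (Fin (m k)) (ZMod 2)) :
    LinearMap.ker (Matrix.blockDiagonal' B).mulVecLin ≃ₗ[ZMod 2]
      ∀ k, LinearMap.ker (B k).mulVecLin where
  toFun x k := ⟨fun i => x.1 ⟨k, i⟩, by
    have hx := x.2
    rw [LinearMap.mem_ker] at hx ⊢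
    funext i
    have h2 := congrFun hx ⟨k, i⟩
    simp only [Matrix.mulVecLin_apply, Pi.zero_apply] at h2
    rw [mulVec_blockDiagonal'_aux] at h2
    exact h2⟩
  invFun y := ⟨fun ik => (y ik.1).1 ik.2, by
    rw [LinearMap.mem_ker]
    funext ik
    obtain ⟨k, i⟩ := ik
    have h2 := congrFun ((y k).2 : (B k).mulVecLin (y k).1 = 0) i
    simp only [Matrix.mulVecLin_apply, Pi.zero_apply] at h2
    simp only [Matrix.mulVecLin_apply, Pi.zero_apply, mulVec_blockDiagonal'_aux]
    exact h2⟩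
  map_add' x y := rfl
  map_smul' c x := rfl
  left_inv x := rfl
  right_inv y := rfl

lemma nullity_blockDiagonal' (B : ∀ k, Matrix (Fin (m k)) (Fin (m k)) (ZMod 2)) :
    nullity (Matrix.blockDiagonal' B) = ∑ k, nullity (B k) := by
  unfold nullity
  rw [(kerEquiv B).finrank_eq, Module.finrank_pi_fintype]

/-- Subsets of a sigma type correspond to families of subsets. -/
def sigmaFinsetEquiv : Finset (Σ k, Fin (m k)) ≃ ∀ k, Finset (Fin (m k)) where
  toFun S k := Finset.univ.filter (fun i => (⟨k, i⟩ : Σ k, Fin (m k)) ∈ S)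
  invFun f := Finset.univ.sigma f
  left_inv S := by
    ext ⟨k, i⟩
    simp [Finset.mem_sigma]
  right_inv f := by
    funext k
    ext i
    simp [Finset.mem_sigma]

lemma prod_T {α : Type*} (s : Finset α) (g : α → ℤ) :
    (∏ k ∈ s, (T (g k) : LaurentPolynomial ℤ)) = T (∑ k ∈ s, g k) := by
  induction s using Finset.cons_induction with
  | empty => simp
  | cons a s ha ih => rw [Finset.prod_cons, Finset.sum_cons, ih, T_add]

end Aux

/-- The Zulli state sum of a block diagonal matrix is the product of the
state sums of the blocks. -/
theorem stateSum_blockDiagonal' {ι : Type*} [Fintype ι] [DecidableEq ι]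
    {m : ι → ℕ} (A : ∀ k, Matrix (Fin (m k)) (Fin (m k)) (ZMod 2)) :
    stateSum (Matrix.blockDiagonal' A) = ∏ k : ι, stateSum (A k) := by
  unfold stateSum
  rw [Fintype.prod_sum]
  refine (Fintype.sum_equiv (sigmaFinsetEquiv (m := m)).symm _ _ ?_).symm
  intro f
  have hS : (sigmaFinsetEquiv (m := m)).symm f = Finset.univ.sigma f := rfl
  rw [hS]
  have hdiag :
      (Matrix.diagonal (fun ik => if ik ∈ Finset.univ.sigma f then (1 : ZMod 2) else 0)) =
      Matrix.blockDiagonal'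
        (fun k => Matrix.diagonal (fun i => if i ∈ f k then (1 : ZMod 2) else 0)) := by
    rw [Matrix.blockDiagonal'_diagonal]
    funext ik
    simp [Finset.mem_sigma]
  rw [hdiag, ← Matrix.blockDiagonal'_add, nullity_blockDiagonal',
    Finset.prod_mul_distrib, prod_T, Finset.prod_pow_eq_pow_sum]
  congr 2
  rw [Finset.card_sigma]
  rw [Finset.sum_sub_distrib, ← Finset.mul_sum]
  simp [Fintype.card_sigma]
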